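/- arXiv:2011.02741 — 5 statements merged into one kernel-verified Lean document; each statement's English description precedes it below -/
import Mathlib

section
/- Let (X, G, Φ^X) and (Y, G, Φ^Y) be dynamical systems and let S be a finite subset of G. If Φ^X has the S-shadowing property and φ : X → Y is a factor map which lifts pseudo-orbits for S, then Φ^Y has the S-shadowing property. -/
open Set

universe u

/-! ### Dynamical systems: actions of a countable discrete group by homeomorphisms -/

/-- An action of a group `G` on a topological space `X`: each `act g` is a homeomorphism
(continuity of the inverse follows from `act g⁻¹`). -/
structure DynAction (G X : Type u) [Group G] [TopologicalSpace X] where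
  act : G → X → X
  continuous_act : ∀ g : G, Continuous (act g)
  act_one : ∀ x : X, act 1 x = x
  act_mul : ∀ (g g' : G) (x : X), act (g * g') x = act g (act g' x)

section Covers

variable {G X : Type u} [Group G] [TopologicalSpace X]

/-- A finite open cover of `X`. -/
def IsFOC (𝒰 : Finset (Set X)) : Prop :=
  (∀ U ∈ 𝒰, IsOpen U) ∧ ⋃₀ (𝒰 : Set (Set X)) = Set.univ

/-- A finite partition of `X` into nonempty clopen sets. -/
def IsClopenPartition (𝒰 : Finset (Set X)) : Prop :=
  (∀ U ∈ 𝒰, IsClopen U ∧ U.Nonempty) ∧ ⋃₀ (𝒰 : Set (Set X)) = Set.univ ∧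
    ∀ U ∈ 𝒰, ∀ V ∈ 𝒰, U ≠ V → U ∩ V = ∅

/-- `𝒱` refines `𝒰`: every member of `𝒱` is contained in a member of `𝒰`. -/
def Refines (𝒱 𝒰 : Finset (Set X)) : Prop :=
  ∀ V ∈ 𝒱, ∃ U ∈ 𝒰, V ⊆ U

/-- `{U g}` is a pattern of the `(S,𝒰)`-pseudo-orbit `{x g}`:
all `U g` belong to `𝒰`, and `x (s*g) ∈ U (s*g)` and `Φ_s (x g) ∈ U (s*g)`
for all `g ∈ G`, `s ∈ S`. -/
def IsPseudoOrbitPattern (Φ : DynAction G X) (S : Set G) (𝒰 : Finset (Set X))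
    (x : G → X) (U : G → Set X) : Prop :=
  (∀ g : G, U g ∈ 𝒰) ∧
    ∀ g : G, ∀ s ∈ S, x (s * g) ∈ U (s * g) ∧ Φ.act s (x g) ∈ U (s * g)

/-- `{x g}` is an `(S,𝒰)`-pseudo-orbit. -/
def IsPseudoOrbit (Φ : DynAction G X) (S : Set G) (𝒰 : Finset (Set X)) (x : G → X) : Prop :=
  ∃ U : G → Set X, IsPseudoOrbitPattern Φ S 𝒰 x U

/-- `z` `𝒰`-shadows the family `{x g}`. -/
def Shadows (Φ : DynAction G X) (𝒰 : Finset (Set X)) (z : X) (x : G → X) : Prop :=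
  ∀ g : G, ∃ U ∈ 𝒰, Φ.act g z ∈ U ∧ x g ∈ U

/-- The (topological) `S`-shadowing property. -/
def ShadowingProperty (Φ : DynAction G X) (S : Set G) : Prop :=
  ∀ 𝒰 : Finset (Set X), IsFOC 𝒰 → ∃ 𝒱 : Finset (Set X), IsFOC 𝒱 ∧
    ∀ x : G → X, IsPseudoOrbit Φ S 𝒱 x → ∃ z : X, Shadows Φ 𝒰 z x

/-! ### Equivariant maps, factor maps, conjugacies -/

def IsEquivariant {Y : Type u} [TopologicalSpace Y]
    (ΦX : DynAction G X) (ΦY : DynAction G Y) (f : X → Y) : Prop :=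
  ∀ (g : G) (x : X), f (ΦX.act g x) = ΦY.act g (f x)

/-- `f` is a factor map from `(X,G,ΦX)` onto `(Y,G,ΦY)`. -/
def IsFactorMap {Y : Type u} [TopologicalSpace Y]
    (ΦX : DynAction G X) (ΦY : DynAction G Y) (f : X → Y) : Prop :=
  Continuous f ∧ Function.Surjective f ∧ IsEquivariant ΦX ΦY f

/-- `f` is a conjugacy (bijective factor map). -/
def IsConjugacy {Y : Type u} [TopologicalSpace Y]
    (ΦX : DynAction G X) (ΦY : DynAction G Y) (f : X → Y) : Prop :=
  Continuous f ∧ Function.Bijective f ∧ IsEquivariant ΦX ΦY f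

end Covers

/-! ### Shifts, subshifts, shifts of finite type -/

/-- The shift action on `A^G`: `(σ_g x) h = x (h * g)`. -/
def shift (G A : Type u) [Group G] (g : G) (x : G → A) : G → A :=
  fun h => x (h * g)

/-- The full shift `A^G` (product topology) as a dynamical system. -/
def shiftDyn (G A : Type u) [Group G] [TopologicalSpace A] : DynAction G (G → A) where
  act := shift G A
  continuous_act g := continuous_pi fun h => continuous_apply (h * g)
  act_one x := by funext h; simp [shift]
  act_mul g g' x := by funext h; simp [shift, mul_assoc]

/-- A subshift: a closed shift-invariant subset of the full shift `A^G`. -/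
def IsSubshift {G A : Type u} [Group G] [TopologicalSpace A] (Y : Set (G → A)) : Prop :=
  IsClosed Y ∧ ∀ g : G, ∀ x ∈ Y, shift G A g x ∈ Y

/-- The cylinder set determined by the values of `P` on the finite shape `B`. -/
def cylinder {G A : Type u} (B : Finset G) (P : G → A) : Set (G → A) :=
  {y | ∀ b ∈ B, y b = P b}

/-- The language of `Y ⊆ A^G` over the finite shape `B` (a pattern is recorded by any
function `G → A` with the prescribed values on `B`). -/
def language {G A : Type u} (B : Finset G) (Y : Set (G → A)) : Set (G → A) :=
  {P | (cylinder B P ∩ Y).Nonempty}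

/-- `Y` is a shift of finite type over the finite shape `B`: it is cut out by a family of
forbidden patterns on `B`. -/
def IsSFTOver {G A : Type u} [Group G] (B : Finset G) (Y : Set (G → A)) : Prop :=
  ∃ ℱ : Set (G → A), Y = {x | ∀ g : G, ∀ P ∈ ℱ, shift G A g x ∉ cylinder B P}

/-- The shift action restricted to a subshift. -/
def subshiftDyn {G A : Type u} [Group G] [TopologicalSpace A] (Y : Set (G → A))
    (hY : IsSubshift Y) : DynAction G ↥Y where
  act g x := ⟨shift G A g x.1, hY.2 g x.1 x.2⟩
  continuous_act g := Continuous.subtype_mk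
    ((continuous_pi fun h => continuous_apply (h * g)).comp continuous_subtype_val) _
  act_one x := by apply Subtype.ext; funext h; simp [shift]
  act_mul g g' x := by apply Subtype.ext; funext h; simp [shift, mul_assoc]

/-! ### Hitting time sets and mixing-type properties -/

section Mixing

variable {G X : Type u} [Group G] [TopologicalSpace X]

/-- The hitting time set `N(U,V) = {g ≠ e : U ∩ Φ_{g⁻¹}(V) ≠ ∅}`. -/
def hittingTimes (Φ : DynAction G X) (U V : Set X) : Set G :=
  {g : G | g ≠ 1 ∧ (U ∩ Φ.act g⁻¹ '' V).Nonempty}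

/-- Topological mixing: `G \ N(U,V)` is finite for all nonempty open `U, V`. -/
def IsMixing (Φ : DynAction G X) : Prop :=
  ∀ U V : Set X, IsOpen U → IsOpen V → U.Nonempty → V.Nonempty →
    ((hittingTimes Φ U V)ᶜ : Set G).Finite

/-- Minimality: there is no nonempty proper closed invariant subset. -/
def IsMinimal (Φ : DynAction G X) : Prop :=
  ∀ K : Set X, IsClosed K → (∀ g : G, ∀ x ∈ K, Φ.act g x ∈ K) →
    K = ∅ ∨ K = Set.univ

end Mixing

/-! ### Lifting pseudo-orbits along factor maps -/

/-- `φ` lifts pseudo-orbits for `S`. -/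
def LiftsPseudoOrbits {G X Y : Type u} [Group G] [TopologicalSpace X] [TopologicalSpace Y]
    (ΦX : DynAction G X) (ΦY : DynAction G Y) (φ : X → Y) (S : Set G) : Prop :=
  ∀ 𝒰X : Finset (Set X), IsFOC 𝒰X → ∃ 𝒰Y : Finset (Set Y), IsFOC 𝒰Y ∧
    ∀ y : G → Y, IsPseudoOrbit ΦY S 𝒰Y y →
      ∃ x : G → X, IsPseudoOrbit ΦX S 𝒰X x ∧ ∀ g : G, φ (x g) = y g

/-- `φ` almost lifts pseudo-orbits for `S`. -/
def AlmostLiftsPseudoOrbits {G X Y : Type u} [Group G] [TopologicalSpace X]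
    [TopologicalSpace Y] (ΦX : DynAction G X) (ΦY : DynAction G Y)
    (φ : X → Y) (S : Set G) : Prop :=
  ∀ 𝒰X : Finset (Set X), IsFOC 𝒰X → ∀ 𝒲Y : Finset (Set Y), IsFOC 𝒲Y →
    ∃ 𝒰Y : Finset (Set Y), IsFOC 𝒰Y ∧
      ∀ y : G → Y, IsPseudoOrbit ΦY S 𝒰Y y →
        ∃ x : G → X, IsPseudoOrbit ΦX S 𝒰X x ∧
          ∀ g : G, ∃ W ∈ 𝒲Y, φ (x g) ∈ W ∧ y g ∈ W

/-- **Theorem 5.2.** If `Φ^X` has the `S`-shadowing property and `φ` is a factor map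
which lifts pseudo-orbits for `S`, then `Φ^Y` has the `S`-shadowing property. -/
theorem shadowing_of_factor_lifting
    {G X Y : Type} [Group G] [Countable G]
    [TopologicalSpace X] [CompactSpace X] [T2Space X]
    [TopologicalSpace Y] [CompactSpace Y] [T2Space Y]
    (ΦX : DynAction G X) (ΦY : DynAction G Y) (S : Finset G)
    (φ : X → Y) (hφ : IsFactorMap ΦX ΦY φ)
    (hX : ShadowingProperty ΦX (S : Set G))
    (hlift : LiftsPseudoOrbits ΦX ΦY φ (S : Set G)) :
    ShadowingProperty ΦY (S : Set G) := by

  obtain ⟨hcont, hsurj, hequiv⟩ := hφ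
  intro 𝒰 h𝒰
  classical
  -- pull back cover
  set 𝒰X : Finset (Set X) := 𝒰.image (fun U => φ ⁻¹' U) with h𝒰X
  have h𝒰Xfoc : IsFOC 𝒰X := by
    constructor
    · intro U hU
      simp only [h𝒰X, Finset.mem_image] at hU
      obtain ⟨V, hV, rfl⟩ := hU
      exact (h𝒰.1 V hV).preimage hcont
    · apply Set.eq_univ_of_forall
      intro x
      have : φ x ∈ ⋃₀ (𝒰 : Set (Set Y)) := by rw [h𝒰.2]; trivial
      obtain ⟨V, hV, hxV⟩ := this
      exact ⟨φ ⁻¹' V, by simpa [h𝒰X] using Finset.mem_image_of_mem _ hV, hxV⟩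
  obtain ⟨𝒱X, h𝒱X, hshad⟩ := hX 𝒰X h𝒰Xfoc
  obtain ⟨𝒱Y, h𝒱Y, hliftY⟩ := hlift 𝒱X h𝒱X
  refine ⟨𝒱Y, h𝒱Y, ?_⟩
  intro y hy
  obtain ⟨x, hxpo, hxy⟩ := hliftY y hy
  obtain ⟨z, hz⟩ := hshad x hxpo
  refine ⟨φ z, ?_⟩
  intro g
  obtain ⟨U, hU, hzU, hxU⟩ := hz g
  simp only [h𝒰X, Finset.mem_image] at hU
  obtain ⟨V, hV, rfl⟩ := hU
  refine ⟨V, hV, ?_, ?_⟩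
  · rw [← hequiv g z]; exact hzU
  · rw [← hxy g]; exact hxU
end

section
/- Let (X, G, Φ^X) and (Y, G, Φ^Y) be dynamical systems, S a finite subset of G, and φ : X → Y a factor map. Then: (1) if Φ^X has the S-shadowing property and φ almost lifts pseudo-orbits for S, then Φ^Y has the S-shadowing property; and (2) if Φ^Y has the S-shadowing property, then φ almost lifts pseudo-orbits for S. -/
open Set

universe u

section Aux

variable {G X : Type} [Group G] [TopologicalSpace X]

lemma mem_of_isFOC {𝒰 : Finset (Set X)} (h : IsFOC 𝒰) (x : X) : ∃ U ∈ 𝒰, x ∈ U := by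
  have hx : x ∈ ⋃₀ (𝒰 : Set (Set X)) := h.2 ▸ Set.mem_univ x
  obtain ⟨U, hU, hxU⟩ := hx
  exact ⟨U, hU, hxU⟩

lemma orbit_isPseudoOrbit (Φ : DynAction G X) (S : Set G) {𝒰 : Finset (Set X)}
    (h : IsFOC 𝒰) (z : X) : IsPseudoOrbit Φ S 𝒰 (fun g => Φ.act g z) := by
  choose U hU1 hU2 using fun g => mem_of_isFOC h (Φ.act g z)
  exact ⟨U, hU1, fun g s _ => ⟨hU2 _, by rw [← Φ.act_mul]; exact hU2 _⟩⟩

end Aux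

/-- **Theorem 5.4.** (1) A factor map which almost lifts pseudo-orbits for `S`
transfers the `S`-shadowing property from `X` to `Y`; (2) if `Φ^Y` has the
`S`-shadowing property then every factor map onto `Y` almost lifts pseudo-orbits
for `S`. -/
theorem shadowing_almost_lifting
    {G X Y : Type} [Group G] [Countable G]
    [TopologicalSpace X] [CompactSpace X] [T2Space X]
    [TopologicalSpace Y] [CompactSpace Y] [T2Space Y]
    (ΦX : DynAction G X) (ΦY : DynAction G Y) (S : Finset G)
    (φ : X → Y) (hφ : IsFactorMap ΦX ΦY φ) :
    (ShadowingProperty ΦX (S : Set G) → AlmostLiftsPseudoOrbits ΦX ΦY φ (S : Set G) →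
      ShadowingProperty ΦY (S : Set G)) ∧
    (ShadowingProperty ΦY (S : Set G) → AlmostLiftsPseudoOrbits ΦX ΦY φ (S : Set G)) := by
  obtain ⟨hcont, hsurj, hequi⟩ := hφ
  constructor
  · -- Part (1)
    intro hX hlift 𝒰 h𝒰
    classical
    letI uY : UniformSpace Y := uniformSpaceOfCompactR1
    -- Lebesgue number for 𝒰
    obtain ⟨V, hV, hleb⟩ := lebesgue_number_lemma (U := fun U : {U // U ∈ 𝒰} => U.1)
      (isCompact_univ (X := Y)) (fun U => h𝒰.1 _ U.2)
      (by intro y _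
          obtain ⟨U, hU, hyU⟩ := mem_of_isFOC h𝒰 y
          exact Set.mem_iUnion.2 ⟨⟨U, hU⟩, hyU⟩)
    obtain ⟨W₀, hW₀, hW₀symm, hW₀sub⟩ := comp_comp_symm_mem_uniformity_sets hV
    obtain ⟨W, ⟨hWmem, hWopen, hWsymm⟩, hWsub⟩ :=
      uniformity_hasBasis_open_symmetric.mem_iff.mp hW₀
    have hWWW : SetRel.comp (SetRel.comp W W) W ⊆ V := fun a ha =>
      hW₀sub (SetRel.comp_subset_comp (SetRel.comp_subset_comp hWsub hWsub) hWsub ha)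
    -- finite cover of Y by W-balls
    obtain ⟨t, ht⟩ := (isCompact_univ (X := Y)).elim_finite_subcover
      (fun p : Y => UniformSpace.ball p W)
      (fun p => UniformSpace.isOpen_ball p hWopen)
      (fun y _ => Set.mem_iUnion.2 ⟨y, UniformSpace.mem_ball_self y hWmem⟩)
    set 𝒦 : Finset (Set Y) := t.image (fun p => UniformSpace.ball p W) with h𝒦def
    have h𝒦 : IsFOC 𝒦 := by
      constructor
      · intro K hK
        rw [h𝒦def] at hK
        obtain ⟨p, _, rfl⟩ := Finset.mem_image.1 hK
        exact UniformSpace.isOpen_ball p hWopen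
      · apply Set.eq_univ_of_univ_subset
        intro y hy
        obtain ⟨p, hp⟩ := Set.mem_iUnion₂.1 (ht hy)
        exact ⟨UniformSpace.ball p W, h𝒦def ▸ Finset.mem_image.2 ⟨p, hp.1, rfl⟩, hp.2⟩
    set 𝒰X : Finset (Set X) := 𝒦.image (fun K => φ ⁻¹' K) with h𝒰Xdef
    have h𝒰X : IsFOC 𝒰X := by
      constructor
      · intro U hU
        rw [h𝒰Xdef] at hU
        obtain ⟨K, hK, rfl⟩ := Finset.mem_image.1 hU
        exact (h𝒦.1 K hK).preimage hcont
      · apply Set.eq_univ_of_univ_subset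
        intro x _
        obtain ⟨K, hK, hxK⟩ := mem_of_isFOC h𝒦 (φ x)
        exact ⟨φ ⁻¹' K, h𝒰Xdef ▸ Finset.mem_image.2 ⟨K, hK, rfl⟩, hxK⟩
    obtain ⟨𝒱X, h𝒱X, hshX⟩ := hX 𝒰X h𝒰X
    obtain ⟨𝒰Y, h𝒰Y, hliftY⟩ := hlift 𝒱X h𝒱X 𝒦 h𝒦
    refine ⟨𝒰Y, h𝒰Y, ?_⟩
    intro y hy
    obtain ⟨x, hx, hclose⟩ := hliftY y hy
    obtain ⟨z, hz⟩ := hshX x hx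
    refine ⟨φ z, fun g => ?_⟩
    obtain ⟨UX, hUX, hz1, hz2⟩ := hz g
    rw [h𝒰Xdef] at hUX
    obtain ⟨K', hK'𝒦, rfl⟩ := Finset.mem_image.1 hUX
    rw [h𝒦def] at hK'𝒦
    obtain ⟨p', _, rfl⟩ := Finset.mem_image.1 hK'𝒦
    obtain ⟨Kg, hKg, hx1, hy1⟩ := hclose g
    rw [h𝒦def] at hKg
    obtain ⟨p, _, rfl⟩ := Finset.mem_image.1 hKg
    obtain ⟨U, hU⟩ := hleb p (Set.mem_univ p)
    refine ⟨U.1, U.2, ?_, ?_⟩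
    · -- ΦY.act g (φ z) ∈ ball p V
      apply hU
      have h1 : (p, φ (x g)) ∈ W := hx1
      have h2 : (φ (x g), p') ∈ W := hWsymm.symm _ _ (hz2 : (p', φ (x g)) ∈ W)
      have h3 : (p', ΦY.act g (φ z)) ∈ W := by
        have : φ (ΦX.act g z) ∈ UniformSpace.ball p' W := hz1
        rwa [hequi g z] at this
      exact hWWW ⟨p', ⟨φ (x g), h1, h2⟩, h3⟩
    · -- y g ∈ ball p V
      apply hU
      refine hWWW ⟨p, ⟨p, ?_, ?_⟩, hy1⟩ <;> exact refl_mem_uniformity hWmem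
  · -- Part (2)
    intro hY 𝒰X h𝒰X 𝒲Y h𝒲Y
    obtain ⟨𝒱, h𝒱, hsh⟩ := hY 𝒲Y h𝒲Y
    refine ⟨𝒱, h𝒱, ?_⟩
    intro y hy
    obtain ⟨w, hw⟩ := hsh y hy
    obtain ⟨z, hz⟩ := hsurj w
    refine ⟨fun g => ΦX.act g z, orbit_isPseudoOrbit ΦX _ h𝒰X z, fun g => ?_⟩
    obtain ⟨W, hW, h1, h2⟩ := hw g
    refine ⟨W, hW, ?_, h2⟩
    rw [hequi g z, hz]
    exact h1
end

section
/- Let (X, G, Φ) be a dynamical system where X is a compact metric space, and let S be a finite subset of G. If (X, G, Φ) is a factor, by a factor map which almost lifts pseudo-orbits for S, of the inverse limit of an inverse system of dynamical systems satisfying the Mittag-Leffler condition whose terms are subshifts with the S-shadowing property, then Φ has the S-shadowing property. -/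
open Set

universe u

/-! ### Inverse systems of subshifts -/

/-- An inverse system of dynamical systems whose terms are subshifts over finite
(discrete) alphabets, with the shift `G`-action. -/
structure SubshiftInvSys (G : Type u) [Group G] (Λ : Type u) [Preorder Λ] where
  A : Λ → Type u
  [topoA : ∀ l, TopologicalSpace (A l)]
  [discA : ∀ l, DiscreteTopology (A l)]
  [finA : ∀ l, Finite (A l)]
  Y : ∀ l : Λ, Set (G → A l)
  subshift : ∀ l : Λ, IsSubshift (Y l)
  bond : ∀ {l m : Λ}, l ≤ m → ↥(Y m) → ↥(Y l)
  bond_cont : ∀ {l m : Λ} (h : l ≤ m), Continuous (bond h)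
  bond_refl : ∀ (l : Λ) (x : ↥(Y l)), bond (le_refl l) x = x
  bond_comp : ∀ {l m n : Λ} (h1 : l ≤ m) (h2 : m ≤ n) (x : ↥(Y n)),
    bond h1 (bond h2 x) = bond (h1.trans h2) x
  bond_equivariant : ∀ {l m : Λ} (h : l ≤ m) (g : G) (x : ↥(Y m)),
    (subshiftDyn (Y l) (subshift l)).act g (bond h x)
      = bond h ((subshiftDyn (Y m) (subshift m)).act g x)

namespace SubshiftInvSys

variable {G Λ : Type u} [Group G] [Preorder Λ]

instance (𝒮 : SubshiftInvSys G Λ) (l : Λ) : TopologicalSpace (𝒮.A l) := 𝒮.topoA l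
instance (𝒮 : SubshiftInvSys G Λ) (l : Λ) : DiscreteTopology (𝒮.A l) := 𝒮.discA l
instance (𝒮 : SubshiftInvSys G Λ) (l : Λ) : Finite (𝒮.A l) := 𝒮.finA l

/-- The `G`-action on the term `Y l` (the restricted shift). -/
def termDyn (𝒮 : SubshiftInvSys G Λ) (l : Λ) : DynAction G ↥(𝒮.Y l) :=
  subshiftDyn (𝒮.Y l) (𝒮.subshift l)

/-- The inverse limit of the system, as a subset of the product. -/
def limitSet (𝒮 : SubshiftInvSys G Λ) : Set (∀ l : Λ, ↥(𝒮.Y l)) :=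
  {x | ∀ (l m : Λ) (h : l ≤ m), 𝒮.bond h (x m) = x l}

lemma act_mem_limitSet (𝒮 : SubshiftInvSys G Λ) (g : G) (x : ∀ l : Λ, ↥(𝒮.Y l))
    (hx : x ∈ 𝒮.limitSet) : (fun l => (𝒮.termDyn l).act g (x l)) ∈ 𝒮.limitSet := by
  intro l m h
  show 𝒮.bond h ((𝒮.termDyn m).act g (x m)) = (𝒮.termDyn l).act g (x l)
  rw [show (𝒮.termDyn m).act g (x m)
        = (subshiftDyn (𝒮.Y m) (𝒮.subshift m)).act g (x m) from rfl,
      ← 𝒮.bond_equivariant h g (x m)]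
  show (𝒮.termDyn l).act g (𝒮.bond h (x m)) = _
  rw [hx l m h]

/-- The induced `G`-action `σ*` on the inverse limit. -/
def limitDyn (𝒮 : SubshiftInvSys G Λ) : DynAction G ↥𝒮.limitSet where
  act g x := ⟨fun l => (𝒮.termDyn l).act g (x.1 l), 𝒮.act_mem_limitSet g x.1 x.2⟩
  continuous_act g := Continuous.subtype_mk
    (continuous_pi fun l => ((𝒮.termDyn l).continuous_act g).comp
      ((continuous_apply l).comp continuous_subtype_val)) _
  act_one x := by
    apply Subtype.ext; funext l
    exact (𝒮.termDyn l).act_one (x.1 l)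
  act_mul g g' x := by
    apply Subtype.ext; funext l
    exact (𝒮.termDyn l).act_mul g g' (x.1 l)

/-- The Mittag-Leffler condition. -/
def ML (𝒮 : SubshiftInvSys G Λ) : Prop :=
  ∀ l : Λ, ∃ m : Λ, ∃ h : l ≤ m, ∀ (n : Λ) (h' : m ≤ n),
    Set.range (𝒮.bond (h.trans h')) = Set.range (𝒮.bond h)

end SubshiftInvSys

section AuxCor56

open Metric

namespace SubshiftInvSys

variable {G Λ : Type} [Group G] [Preorder Λ] (𝒮 : SubshiftInvSys G Λ)

instance compactYl (l : Λ) : CompactSpace ↥(𝒮.Y l) := by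
  haveI : CompactSpace (G → 𝒮.A l) := by infer_instance
  exact isCompact_iff_compactSpace.mp ((𝒮.subshift l).1.isCompact)

lemma isClosed_limitSet : IsClosed 𝒮.limitSet := by
  have h : 𝒮.limitSet
      = ⋂ (l : Λ), ⋂ (m : Λ), ⋂ (h : l ≤ m),
          {x : ∀ l, ↥(𝒮.Y l) | 𝒮.bond h (x m) = x l} := by
    ext x
    simp only [limitSet, Set.mem_iInter, Set.mem_setOf_eq]
  rw [h]
  exact isClosed_iInter fun l => isClosed_iInter fun m => isClosed_iInter fun h =>
    isClosed_eq ((𝒮.bond_cont h).comp (continuous_apply m)) (continuous_apply l)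

lemma isCompact_limitSet : IsCompact 𝒮.limitSet :=
  𝒮.isClosed_limitSet.isCompact

/-- In the product of the terms, the "boxes" (finitely many coordinates, finitely many
group elements) form a neighbourhood basis. -/
lemma exists_box_subset (z : ∀ l, ↥(𝒮.Y l)) {A : Set (∀ l, ↥(𝒮.Y l))}
    (hA : IsOpen A) (hz : z ∈ A) :
    ∃ (L : Finset Λ) (B : Finset G),
      {x : ∀ l, ↥(𝒮.Y l) | ∀ l ∈ L, ∀ b ∈ B, (x l).1 b = (z l).1 b} ⊆ A := by
  classical
  obtain ⟨L, u, hu, hsub⟩ := isOpen_pi_iff.mp hA z hz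
  have key : ∀ l ∈ L, ∃ Bl : Finset G,
      ∀ x : ↥(𝒮.Y l), (∀ b ∈ Bl, x.1 b = (z l).1 b) → x ∈ u l := by
    intro l hl
    obtain ⟨hul, hzl⟩ := hu l hl
    obtain ⟨v, hv, hveq⟩ := isOpen_induced_iff.mp hul
    have hzv : (z l).1 ∈ v := by rw [← hveq] at hzl; exact hzl
    obtain ⟨Bl, ww, hww, hwsub⟩ := isOpen_pi_iff.mp hv (z l).1 hzv
    refine ⟨Bl, fun x hx => ?_⟩
    rw [← hveq]
    refine hwsub ?_
    intro b hb
    rw [hx b hb]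
    exact (hww b hb).2
  choose! Bl hBl using key
  refine ⟨L, L.biUnion Bl, fun x hx => hsub ?_⟩
  intro l hl
  exact hBl l hl (x l) (fun b hb => hx l hl b (Finset.mem_biUnion.mpr ⟨l, hl, hb⟩))

/-- Under the Mittag-Leffler condition, any point of the stable image at level `m`
is the `m`-th coordinate of a point of the inverse limit. -/
lemma exists_limit_preimage [IsDirected Λ (· ≤ ·)]
    (hne : ∀ l, Nonempty ↥(𝒮.Y l)) {m n : Λ} (hmn : m ≤ n)
    (hstab : ∀ γ (h : n ≤ γ),
      Set.range (𝒮.bond (hmn.trans h)) = Set.range (𝒮.bond hmn))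
    (w : ↥(𝒮.Y n)) :
    ∃ x ∈ 𝒮.limitSet, x m = 𝒮.bond hmn w := by
  classical
  set P := ∀ l, ↥(𝒮.Y l) with hP
  set Ds : {γ : Λ // n ≤ γ} → Set P := fun γ =>
    {x | ∃ v : ↥(𝒮.Y γ.1), 𝒮.bond (hmn.trans γ.2) v = 𝒮.bond hmn w ∧
      ∀ l (h : l ≤ γ.1), x l = 𝒮.bond h v} with hDs
  haveI : Nonempty {γ : Λ // n ≤ γ} := ⟨⟨n, le_refl n⟩⟩
  -- each Ds γ is the image of a compact set
  have himg : ∀ γ : {γ : Λ // n ≤ γ}, ∃ (K : Set (↥(𝒮.Y γ.1) × P)) (φ : ↥(𝒮.Y γ.1) × P → P),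
      IsCompact K ∧ Continuous φ ∧ Ds γ = φ '' K := by
    intro γ
    refine ⟨(𝒮.bond (hmn.trans γ.2) ⁻¹' {𝒮.bond hmn w}) ×ˢ Set.univ,
      fun vx => fun l => if h : l ≤ γ.1 then 𝒮.bond h vx.1 else vx.2 l, ?_, ?_, ?_⟩
    · exact (((isClosed_singleton).preimage (𝒮.bond_cont _)).isCompact).prod isCompact_univ
    · refine continuous_pi fun l => ?_
      by_cases h : l ≤ γ.1
      · simp only [dif_pos h]
        exact (𝒮.bond_cont h).comp continuous_fst
      · simp only [dif_neg h]
        exact (continuous_apply l).comp continuous_snd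
    · ext x
      constructor
      · rintro ⟨v, hv1, hv2⟩
        refine ⟨(v, x), ⟨hv1, Set.mem_univ _⟩, ?_⟩
        funext l
        by_cases h : l ≤ γ.1
        · simp only [dif_pos h]
          exact (hv2 l h).symm
        · simp only [dif_neg h]
      · rintro ⟨⟨v, x'⟩, ⟨hv1, -⟩, rfl⟩
        exact ⟨v, hv1, fun l h => dif_pos h⟩
  choose K φmap hK hφ hDK using himg
  have hcmp : ∀ γ, IsCompact (Ds γ) := fun γ => by
    rw [hDK γ]; exact (hK γ).image (hφ γ)
  have hcl : ∀ γ, IsClosed (Ds γ) := fun γ => (hcmp γ).isClosed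
  have hnonempty : ∀ γ, (Ds γ).Nonempty := by
    intro γ
    have hmem : 𝒮.bond hmn w ∈ Set.range (𝒮.bond (hmn.trans γ.2)) := by
      rw [hstab γ.1 γ.2]; exact ⟨w, rfl⟩
    obtain ⟨v, hv⟩ := hmem
    refine ⟨fun l => if h : l ≤ γ.1 then 𝒮.bond h v else (hne l).some,
      ⟨v, hv, fun l h => dif_pos h⟩⟩
  have hdir : Directed (· ⊇ ·) Ds := by
    intro γ γ'
    obtain ⟨δ, hδ1, hδ2⟩ := directed_of (· ≤ ·) γ.1 γ'.1
    have hsubs : ∀ (β : {γ : Λ // n ≤ γ}) (hβ : β.1 ≤ δ),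
        Ds ⟨δ, β.2.trans hβ⟩ ⊆ Ds β := by
      rintro β hβ x ⟨v, hv1, hv2⟩
      refine ⟨𝒮.bond hβ v, ?_, ?_⟩
      · rw [𝒮.bond_comp]; exact hv1
      · intro l h
        rw [hv2 l (h.trans hβ), 𝒮.bond_comp]
    exact ⟨⟨δ, γ.2.trans hδ1⟩, hsubs γ hδ1, hsubs γ' hδ2⟩
  obtain ⟨x, hx⟩ := IsCompact.nonempty_iInter_of_directed_nonempty_isCompact_isClosed
    Ds hdir hnonempty hcmp hcl
  have hmem : ∀ γ, x ∈ Ds γ := fun γ => Set.mem_iInter.mp hx γ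
  have hxm : x m = 𝒮.bond hmn w := by
    obtain ⟨v, hv1, hv2⟩ := hmem ⟨n, le_refl n⟩
    rw [hv2 m hmn]
    exact hv1
  refine ⟨x, ?_, hxm⟩
  intro l m' h
  obtain ⟨δ, hδ1, hδ2⟩ := directed_of (· ≤ ·) m' n
  obtain ⟨v, hv1, hv2⟩ := hmem ⟨δ, hδ2⟩
  rw [hv2 l (h.trans hδ1), hv2 m' hδ1, 𝒮.bond_comp]

end SubshiftInvSys

end AuxCor56

/-- **Corollary 5.6.** If `(X,G,Φ)` (with `X` compact metric) is a factor of the inverse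
limit of an ML inverse system of subshifts with the `S`-shadowing property, by a factor
map which almost lifts pseudo-orbits for `S`, then `Φ` has the `S`-shadowing property. -/
theorem shadowing_of_factor_of_invlim_shadowing_subshifts
    {G X : Type} [Group G] [Countable G] [MetricSpace X] [CompactSpace X]
    (Φ : DynAction G X) (S : Finset G)
    {Λ : Type} [Preorder Λ] [IsDirected Λ (· ≤ ·)]
    (𝒮 : SubshiftInvSys G Λ) (hML : 𝒮.ML)
    (hterms : ∀ l : Λ, ShadowingProperty (𝒮.termDyn l) (S : Set G))
    (f : ↥𝒮.limitSet → X) (hf : IsFactorMap 𝒮.limitDyn Φ f)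
    (halmost : AlmostLiftsPseudoOrbits 𝒮.limitDyn Φ f (S : Set G)) :
    ShadowingProperty Φ (S : Set G) := by
  classical
  intro 𝒰 h𝒰
  rcases isEmpty_or_nonempty X with hX | hX
  · exact ⟨𝒰, h𝒰, fun x _ => (hX.false (x 1)).elim⟩
  rcases isEmpty_or_nonempty Λ with hΛ | hΛ
  · -- degenerate case: the limit (hence `X`) is a single point
    have hsub : ∀ a b : X, a = b := by
      intro a b
      obtain ⟨za, hza⟩ := hf.2.1 a
      obtain ⟨zb, hzb⟩ := hf.2.1 b
      have hz : za = zb := Subtype.ext (funext fun l => (hΛ.false l).elim)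
      rw [← hza, ← hzb, hz]
    refine ⟨𝒰, h𝒰, fun x _ => ⟨x 1, fun g => ?_⟩⟩
    have hxg : x g ∈ ⋃₀ (𝒰 : Set (Set X)) := by rw [h𝒰.2]; trivial
    obtain ⟨U, hU, hxU⟩ := hxg
    exact ⟨U, hU, by rw [hsub (Φ.act g (x 1)) (x g)]; exact ⟨hxU, hxU⟩⟩
  -- main case
  obtain ⟨z₀, -⟩ := hf.2.1 (Classical.arbitrary X)
  have hne : ∀ l, Nonempty ↥(𝒮.Y l) := fun l => ⟨z₀.1 l⟩
  -- Lebesgue number δ for 𝒰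
  have hcover : (Set.univ : Set X) ⊆ ⋃ U : {U // U ∈ 𝒰}, U.1 := by
    intro a _
    have ha : a ∈ ⋃₀ (𝒰 : Set (Set X)) := by rw [h𝒰.2]; trivial
    obtain ⟨U, hU, haU⟩ := ha
    exact Set.mem_iUnion.mpr ⟨⟨U, hU⟩, haU⟩
  obtain ⟨δ, hδ, hleb⟩ := lebesgue_number_lemma_of_metric isCompact_univ
    (fun U : {U // U ∈ 𝒰} => h𝒰.1 U.1 U.2) hcover
  -- finite cover of X by balls of radius δ/5
  obtain ⟨T, hT⟩ := isCompact_univ.elim_finite_subcover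
    (fun c : X => Metric.ball c (δ / 5)) (fun _ => Metric.isOpen_ball)
    (fun a _ => Set.mem_iUnion.mpr ⟨a, Metric.mem_ball_self (by linarith)⟩)
  set 𝒲 : Finset (Set X) := T.image (fun c => Metric.ball c (δ / 5)) with h𝒲def
  have foc𝒲 : IsFOC 𝒲 := by
    constructor
    · intro U hU
      obtain ⟨c, -, rfl⟩ := Finset.mem_image.mp hU
      exact Metric.isOpen_ball
    · apply Set.eq_univ_of_forall
      intro a
      obtain ⟨c, hc, hac⟩ := Set.mem_iUnion₂.mp (hT (Set.mem_univ a))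
      exact ⟨Metric.ball c (δ / 5), Finset.mem_image_of_mem _ hc, hac⟩
  -- for each point of the limit, a box neighbourhood mapped by f into a δ/5-ball
  have hdata : ∀ z : ↥𝒮.limitSet, ∃ c ∈ T, ∃ L : Finset Λ, ∃ B : Finset G,
      ∀ x : ↥𝒮.limitSet, (∀ l ∈ L, ∀ b ∈ B, (x.1 l).1 b = (z.1 l).1 b) →
        f x ∈ Metric.ball c (δ / 5) := by
    intro z
    obtain ⟨c, hc, hfz⟩ := Set.mem_iUnion₂.mp (hT (Set.mem_univ (f z)))
    have hopen : IsOpen (f ⁻¹' Metric.ball c (δ / 5)) :=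
      Metric.isOpen_ball.preimage hf.1
    obtain ⟨A, hA, hAeq⟩ := isOpen_induced_iff.mp hopen
    have hzA : z.1 ∈ A := by
      have : z ∈ f ⁻¹' Metric.ball c (δ / 5) := hfz
      rw [← hAeq] at this
      exact this
    obtain ⟨L, B, hbox⟩ := 𝒮.exists_box_subset z.1 hA hzA
    refine ⟨c, hc, L, B, fun x hx => ?_⟩
    have hxA : x.1 ∈ A := hbox hx
    have : x ∈ Subtype.val ⁻¹' A := hxA
    rw [hAeq] at this
    exact this
  choose c hcT L B hbox using hdata
  -- finite subcover of the limit set by boxes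
  have hboxopen : ∀ z : ↥𝒮.limitSet,
      IsOpen {x : ∀ l, ↥(𝒮.Y l) | ∀ l ∈ L z, ∀ b ∈ B z, (x l).1 b = (z.1 l).1 b} := by
    intro z
    have heq : {x : ∀ l, ↥(𝒮.Y l) | ∀ l ∈ L z, ∀ b ∈ B z, (x l).1 b = (z.1 l).1 b}
        = ⋂ l ∈ L z, ⋂ b ∈ B z, (fun x : ∀ l, ↥(𝒮.Y l) => (x l).1 b) ⁻¹' {(z.1 l).1 b} := by
      ext x
      simp only [Set.mem_iInter, Set.mem_setOf_eq, Set.mem_preimage, Set.mem_singleton_iff]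
    rw [heq]
    exact isOpen_biInter_finset fun l _ => isOpen_biInter_finset fun b _ =>
      (isOpen_discrete _).preimage
        ((continuous_apply b).comp (continuous_subtype_val.comp (continuous_apply l)))
  have hcov2 : 𝒮.limitSet ⊆ ⋃ z : ↥𝒮.limitSet,
      {x : ∀ l, ↥(𝒮.Y l) | ∀ l ∈ L z, ∀ b ∈ B z, (x l).1 b = (z.1 l).1 b} :=
    fun x hx => Set.mem_iUnion.mpr ⟨⟨x, hx⟩, fun l _ b _ => rfl⟩
  obtain ⟨t, ht⟩ := (𝒮.isCompact_limitSet).elim_finite_subcover _ hboxopen hcov2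
  -- an upper bound m for all coordinates occurring in the boxes
  obtain ⟨m, hm⟩ := (t.biUnion (fun z => L z)).exists_le
  have hLm : ∀ z ∈ t, ∀ l ∈ L z, l ≤ m :=
    fun z hz l hl => hm l (Finset.mem_biUnion.mpr ⟨z, hz, hl⟩)
  -- the clopen sets D z in Y m corresponding to the boxes
  set D : ↥𝒮.limitSet → Set ↥(𝒮.Y m) := fun z =>
    {y | ∀ l ∈ L z, ∀ b ∈ B z, ∀ h : l ≤ m, (𝒮.bond h y).1 b = (z.1 l).1 b} with hDdef
  have hDite : ∀ z : ↥𝒮.limitSet, D z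
      = ⋂ l ∈ L z, ⋂ b ∈ B z,
        (if h : l ≤ m then {y : ↥(𝒮.Y m) | (𝒮.bond h y).1 b = (z.1 l).1 b}
          else Set.univ) := by
    intro z
    ext y
    simp only [hDdef, Set.mem_iInter, Set.mem_setOf_eq]
    constructor
    · intro hy l hl b hb
      by_cases h : l ≤ m
      · rw [dif_pos h]; exact hy l hl b hb h
      · rw [dif_neg h]; trivial
    · intro hy l hl b hb h
      have := hy l hl b hb
      rwa [dif_pos h] at this
  have hDopen : ∀ z, IsOpen (D z) := by
    intro z
    rw [hDite z]
    refine isOpen_biInter_finset fun l _ => isOpen_biInter_finset fun b _ => ?_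
    by_cases h : l ≤ m
    · rw [dif_pos h]
      have hpre : {y : ↥(𝒮.Y m) | (𝒮.bond h y).1 b = (z.1 l).1 b}
          = (fun y : ↥(𝒮.Y m) => (𝒮.bond h y).1 b) ⁻¹' {(z.1 l).1 b} := rfl
      rw [hpre]
      exact (isOpen_discrete _).preimage
        ((continuous_apply b).comp (continuous_subtype_val.comp (𝒮.bond_cont h)))
    · rw [dif_neg h]; exact isOpen_univ
  have hDclosed : ∀ z, IsClosed (D z) := by
    intro z
    rw [hDite z]
    refine isClosed_biInter fun l _ => isClosed_biInter fun b _ => ?_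
    by_cases h : l ≤ m
    · rw [dif_pos h]
      have hpre : {y : ↥(𝒮.Y m) | (𝒮.bond h y).1 b = (z.1 l).1 b}
          = (fun y : ↥(𝒮.Y m) => (𝒮.bond h y).1 b) ⁻¹' {(z.1 l).1 b} := rfl
      rw [hpre]
      exact (isClosed_discrete _).preimage
        ((continuous_apply b).comp (continuous_subtype_val.comp (𝒮.bond_cont h)))
    · rw [dif_neg h]; exact isClosed_univ
  -- membership in D z at level m ⟷ membership in the box, for points of the limit
  have hK1 : ∀ z ∈ t, ∀ x : ↥𝒮.limitSet,
      x.1 m ∈ D z ↔ ∀ l ∈ L z, ∀ b ∈ B z, (x.1 l).1 b = (z.1 l).1 b := by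
    intro z hz x
    constructor
    · intro hx l hl b hb
      have h := hLm z hz l hl
      have hb' := hx l hl b hb h
      rwa [x.2 l m h] at hb'
    · intro hx l hl b hb h
      have hxl := x.2 l m h
      rw [hxl]
      exact hx l hl b hb
  -- the finite clopen cover 𝒞 of Y m
  set D₀ : Set ↥(𝒮.Y m) := (⋃ z ∈ t, D z)ᶜ with hD₀def
  set 𝒞 : Finset (Set ↥(𝒮.Y m)) := insert D₀ (t.image D) with h𝒞def
  have foc𝒞 : IsFOC 𝒞 := by
    constructor
    · intro C hC
      rcases Finset.mem_insert.mp hC with h | h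
      · rw [h, hD₀def]
        exact (Set.Finite.isClosed_biUnion t.finite_toSet fun z _ =>
          hDclosed z).isOpen_compl
      · obtain ⟨z, -, rfl⟩ := Finset.mem_image.mp h
        exact hDopen z
    · apply Set.eq_univ_of_forall
      intro y
      by_cases hy : y ∈ ⋃ z ∈ t, D z
      · obtain ⟨z, hz, hyz⟩ := Set.mem_iUnion₂.mp hy
        exact ⟨D z, Finset.mem_insert_of_mem (Finset.mem_image_of_mem D hz), hyz⟩
      · exact ⟨D₀, Finset.mem_insert_self _ _, hy⟩
  -- Mittag-Leffler at m
  obtain ⟨n, hmn, hstab⟩ := hML m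
  -- pull 𝒞 back to Y n and use shadowing there
  set 𝒞' : Finset (Set ↥(𝒮.Y n)) := 𝒞.image (fun C => 𝒮.bond hmn ⁻¹' C) with h𝒞'def
  have foc𝒞' : IsFOC 𝒞' := by
    constructor
    · intro C' hC'
      obtain ⟨C, hC, rfl⟩ := Finset.mem_image.mp hC'
      exact (foc𝒞.1 C hC).preimage (𝒮.bond_cont hmn)
    · apply Set.eq_univ_of_forall
      intro v
      have hv : 𝒮.bond hmn v ∈ ⋃₀ (𝒞 : Set (Set ↥(𝒮.Y m))) := by rw [foc𝒞.2]; trivial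
      obtain ⟨C, hC, hvC⟩ := hv
      exact ⟨𝒮.bond hmn ⁻¹' C, Finset.mem_image_of_mem _ hC, hvC⟩
  obtain ⟨𝒱n, foc𝒱n, hshadow⟩ := hterms n 𝒞' foc𝒞'
  -- pull 𝒱n back to the limit
  set 𝒰X : Finset (Set ↥𝒮.limitSet) :=
    𝒱n.image (fun V => (fun z : ↥𝒮.limitSet => z.1 n) ⁻¹' V) with h𝒰Xdef
  have foc𝒰X : IsFOC 𝒰X := by
    constructor
    · intro U hU
      obtain ⟨V, hV, rfl⟩ := Finset.mem_image.mp hU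
      exact (foc𝒱n.1 V hV).preimage ((continuous_apply n).comp continuous_subtype_val)
    · apply Set.eq_univ_of_forall
      intro z
      have hz : z.1 n ∈ ⋃₀ (𝒱n : Set (Set ↥(𝒮.Y n))) := by rw [foc𝒱n.2]; trivial
      obtain ⟨V, hV, hzV⟩ := hz
      exact ⟨(fun z : ↥𝒮.limitSet => z.1 n) ⁻¹' V, Finset.mem_image_of_mem _ hV, hzV⟩
  -- almost lifting
  obtain ⟨𝒱, foc𝒱, hlift⟩ := halmost 𝒰X foc𝒰X 𝒲 foc𝒲
  refine ⟨𝒱, foc𝒱, ?_⟩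
  intro y hy
  obtain ⟨x, hxpo, hclose⟩ := hlift y hy
  -- the projected pseudo-orbit in Y n
  obtain ⟨Uu, hU1, hU2⟩ := hxpo
  choose V hV1 hV2 using fun g => Finset.mem_image.mp (hU1 g)
  have hppo : IsPseudoOrbit (𝒮.termDyn n) (S : Set G) 𝒱n (fun g => (x g).1 n) := by
    refine ⟨V, hV1, fun g s hs => ?_⟩
    obtain ⟨h1, h2⟩ := hU2 g s hs
    rw [← hV2 (s * g)] at h1 h2
    exact ⟨h1, h2⟩
  obtain ⟨w, hw⟩ := hshadow _ hppo
  -- the shadowing point in the limit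
  obtain ⟨xz, hxzL, hxzm⟩ := 𝒮.exists_limit_preimage hne hmn hstab w
  refine ⟨f ⟨xz, hxzL⟩, ?_⟩
  intro g
  obtain ⟨C', hC', hwc, hpc⟩ := hw g
  obtain ⟨C, hC, rfl⟩ := Finset.mem_image.mp hC'
  -- both m-th coordinates lie in C
  have hxm : (x g).1 m ∈ C := by
    have hb2 : 𝒮.bond hmn ((x g).1 n) ∈ C := hpc
    rwa [(x g).2 m n hmn] at hb2
  have hzm : ((𝒮.limitDyn.act g ⟨xz, hxzL⟩).1 m) ∈ C := by
    show (𝒮.termDyn m).act g (xz m) ∈ C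
    have heq : (𝒮.termDyn m).act g (𝒮.bond hmn w)
        = 𝒮.bond hmn ((𝒮.termDyn n).act g w) := 𝒮.bond_equivariant hmn g w
    rw [hxzm, heq]
    exact hwc
  -- C is one of the boxes
  have hCbox : ∃ zi ∈ t, C = D zi := by
    rcases Finset.mem_insert.mp hC with h | h
    · exfalso
      have hxbox := ht ((x g).2)
      obtain ⟨zi, hzi, hxi⟩ := Set.mem_iUnion₂.mp hxbox
      have hxD : (x g).1 m ∈ D zi := (hK1 zi hzi (x g)).mpr hxi
      rw [h] at hxm
      exact hxm (Set.mem_biUnion hzi hxD)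
    · obtain ⟨zi, hzi, hCeq⟩ := Finset.mem_image.mp h
      exact ⟨zi, hzi, hCeq.symm⟩
  obtain ⟨zi, hzit, rfl⟩ := hCbox
  -- distance estimates
  have h1 : f (𝒮.limitDyn.act g ⟨xz, hxzL⟩) ∈ Metric.ball (c zi) (δ / 5) :=
    hbox zi _ ((hK1 zi hzit _).mp hzm)
  have h2 : f (x g) ∈ Metric.ball (c zi) (δ / 5) :=
    hbox zi _ ((hK1 zi hzit _).mp hxm)
  obtain ⟨W, hW, hfW, hyW⟩ := hclose g
  obtain ⟨c', -, rfl⟩ := Finset.mem_image.mp hW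
  rw [Metric.mem_ball] at h1 h2 hfW hyW
  have hfeq : f (𝒮.limitDyn.act g ⟨xz, hxzL⟩) = Φ.act g (f ⟨xz, hxzL⟩) :=
    hf.2.2 g ⟨xz, hxzL⟩
  have hdist : dist (y g) (Φ.act g (f ⟨xz, hxzL⟩)) < δ := by
    rw [← hfeq]
    have d1 := dist_triangle (y g) (f (x g)) (f (𝒮.limitDyn.act g ⟨xz, hxzL⟩))
    have d2 := dist_triangle (y g) c' (f (x g))
    have d3 := dist_triangle (f (x g)) (c zi) (f (𝒮.limitDyn.act g ⟨xz, hxzL⟩))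
    have e1 : dist c' (f (x g)) = dist (f (x g)) c' := dist_comm _ _
    have e2 : dist (c zi) (f (𝒮.limitDyn.act g ⟨xz, hxzL⟩))
        = dist (f (𝒮.limitDyn.act g ⟨xz, hxzL⟩)) (c zi) := dist_comm _ _
    linarith
  obtain ⟨U, hU⟩ := hleb (Φ.act g (f ⟨xz, hxzL⟩)) (Set.mem_univ _)
  exact ⟨U.1, U.2, hU (Metric.mem_ball_self hδ), hU (Metric.mem_ball.mpr hdist)⟩
end

section
/- Let (X, G, Φ) be a dynamical system, 𝒰 a finite open cover of X, and A a finite subset of G. Then for any P_A, P'_A ∈ ℒ_A(𝒪(𝒰)), one has N(U, V) \ (A⁻¹A) ⊆ N(C(P_A) ∩ 𝒪(𝒰), C(P'_A) ∩ 𝒪(𝒰)) ⊆ N(U, V), where U = ∩_{g∈A} Φ_{g⁻¹}(P_A(g)), V = ∩_{g∈A} Φ_{g⁻¹}(P'_A(g)), and A⁻¹A = {a⁻¹a' : a, a' ∈ A}. -/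
open Set

universe u

/-! ### Orbit spaces and pseudo-orbit spaces of finite covers -/

/-- An element of the finite cover `𝒰`, regarded as a letter of a (discrete) finite
alphabet. -/
structure CoverElt {X : Type u} (𝒰 : Finset (Set X)) where
  val : Set X
  mem : val ∈ 𝒰

instance {X : Type u} (𝒰 : Finset (Set X)) : TopologicalSpace (CoverElt 𝒰) := ⊥
instance {X : Type u} (𝒰 : Finset (Set X)) : DiscreteTopology (CoverElt 𝒰) := ⟨rfl⟩
instance {X : Type u} (𝒰 : Finset (Set X)) : Finite (CoverElt 𝒰) :=
  Finite.of_injective (fun e => (⟨e.val, e.mem⟩ : {U : Set X // U ∈ 𝒰}))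
    (fun a b hab => by cases a; cases b; simpa using hab)

/-- The `𝒰`-orbit space `𝒪(𝒰)`: the closure in the full shift `𝒰^G` of the set of
orbit patterns. -/
def orbitSpace {G X : Type u} [Group G] [TopologicalSpace X]
    (Φ : DynAction G X) (𝒰 : Finset (Set X)) : Set (G → CoverElt 𝒰) :=
  closure {u : G → CoverElt 𝒰 | (⋂ g : G, Φ.act g⁻¹ '' (u g).val).Nonempty}

/-- The `(S,𝒰)`-pseudo-orbit space `𝒫𝒪_S(𝒰)`: all patterns of `(S,𝒰)`-pseudo-orbits. -/
def psOrbitSpace {G X : Type u} [Group G] [TopologicalSpace X]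
    (Φ : DynAction G X) (S : Set G) (𝒰 : Finset (Set X)) : Set (G → CoverElt 𝒰) :=
  {u : G → CoverElt 𝒰 | ∃ x : G → X, IsPseudoOrbitPattern Φ S 𝒰 x (fun g => (u g).val)}

section Aux

variable {G X : Type u} [Group G] [TopologicalSpace X]

lemma DynAction.act_act_inv (Φ : DynAction G X) (g : G) (x : X) :
    Φ.act g (Φ.act g⁻¹ x) = x := by
  rw [← Φ.act_mul, mul_inv_cancel, Φ.act_one]

lemma DynAction.mem_inv_image (Φ : DynAction G X) (g : G) (S : Set X) (x : X) :
    x ∈ Φ.act g⁻¹ '' S ↔ Φ.act g x ∈ S := by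
  constructor
  · rintro ⟨s, hs, rfl⟩; rwa [Φ.act_act_inv]
  · intro h; exact ⟨Φ.act g x, h, by rw [← Φ.act_mul, inv_mul_cancel, Φ.act_one]⟩

lemma exists_agree_of_mem_closure {G A : Type u} [TopologicalSpace A] [DiscreteTopology A]
    {S : Set (G → A)} {u : G → A} (hu : u ∈ closure S) (F : Finset G) :
    ∃ w ∈ S, ∀ g ∈ F, w g = u g := by
  have hopen : IsOpen {w : G → A | ∀ g ∈ F, w g = u g} := by
    have : {w : G → A | ∀ g ∈ F, w g = u g} = ⋂ g ∈ F, (fun w => w g) ⁻¹' {u g} := by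
      ext w; simp [Set.mem_iInter]
    rw [this]
    exact isOpen_biInter_finset fun g _ =>
      (continuous_apply g).isOpen_preimage _ (isOpen_discrete _)
  obtain ⟨w, hw1, hw2⟩ := mem_closure_iff.mp hu _ hopen (fun g _ => rfl)
  exact ⟨w, hw2, hw1⟩

end Aux

/-- **Lemma 6.3.** Hitting times between cylinder sets of the orbit space are squeezed
between `N(U,V) \ A⁻¹A` and `N(U,V)`. -/
theorem hittingTimes_cylinders_orbitSpace
    {G X : Type} [Group G] [Countable G] [TopologicalSpace X]
    [CompactSpace X] [T2Space X]
    (Φ : DynAction G X) (𝒰 : Finset (Set X)) (h𝒰 : IsFOC 𝒰) (B : Finset G)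
    (P P' : G → CoverElt 𝒰)
    (hP : P ∈ language B (orbitSpace Φ 𝒰)) (hP' : P' ∈ language B (orbitSpace Φ 𝒰)) :
    hittingTimes Φ (⋂ g ∈ B, Φ.act g⁻¹ '' (P g).val) (⋂ g ∈ B, Φ.act g⁻¹ '' (P' g).val)
        \ {g : G | ∃ a ∈ B, ∃ a' ∈ B, g = a⁻¹ * a'} ⊆
      hittingTimes (shiftDyn G (CoverElt 𝒰))
        (cylinder B P ∩ orbitSpace Φ 𝒰) (cylinder B P' ∩ orbitSpace Φ 𝒰) ∧
    hittingTimes (shiftDyn G (CoverElt 𝒰))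
        (cylinder B P ∩ orbitSpace Φ 𝒰) (cylinder B P' ∩ orbitSpace Φ 𝒰) ⊆
      hittingTimes Φ (⋂ g ∈ B, Φ.act g⁻¹ '' (P g).val)
        (⋂ g ∈ B, Φ.act g⁻¹ '' (P' g).val) := by
  classical
  -- a choice function picking a cover element containing a given point
  have hpick : ∀ x : X, ∃ e : CoverElt 𝒰, x ∈ e.val := by
    intro x
    have : x ∈ ⋃₀ (𝒰 : Set (Set X)) := h𝒰.2 ▸ Set.mem_univ x
    obtain ⟨U, hU, hxU⟩ := this
    exact ⟨⟨U, hU⟩, hxU⟩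
  choose pick hpickmem using hpick
  constructor
  · rintro h ⟨⟨hne, x, hxU, hximg⟩, hnotB⟩
    have hy : Φ.act h x ∈ ⋂ g ∈ B, Φ.act g⁻¹ '' (P' g).val :=
      (Φ.mem_inv_image h _ x).mp hximg
    set y := Φ.act h x with hy_def
    -- B and B·h are disjoint
    have hdisj : ∀ g : G, g ∈ B → g * h⁻¹ ∉ B := by
      intro g hg hgh
      exact hnotB ⟨g * h⁻¹, hgh, g, hg, by group⟩
    -- the pattern
    set u : G → CoverElt 𝒰 := fun g =>
      if g ∈ B then P g else if g * h⁻¹ ∈ B then P' (g * h⁻¹) else pick (Φ.act g x)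
      with hu_def
    have hucyl : ∀ b ∈ B, u b = P b := by intro b hb; simp [hu_def, hb]
    have hucyl' : ∀ b ∈ B, u (b * h) = P' b := by
      intro b hb
      have h1 : b * h ∉ B := by
        intro hc
        have := hdisj (b * h) hc
        simp [hb] at this
      simp [hu_def, h1, hb]
    -- x witnesses u is an orbit pattern
    have hux : ∀ g : G, Φ.act g x ∈ (u g).val := by
      intro g
      by_cases hg : g ∈ B
      · rw [hucyl g hg]
        have := Set.mem_iInter₂.mp hxU g hg
        exact (Φ.mem_inv_image g _ x).mp this
      · by_cases hg' : g * h⁻¹ ∈ B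
        · have hgeq : g = (g * h⁻¹) * h := by group
          have : Φ.act (g * h⁻¹) y ∈ (P' (g * h⁻¹)).val := by
            have := Set.mem_iInter₂.mp hy (g * h⁻¹) hg'
            exact (Φ.mem_inv_image (g * h⁻¹) _ y).mp this
          have heq : Φ.act g x = Φ.act (g * h⁻¹) y := by
            rw [hy_def, ← Φ.act_mul, inv_mul_cancel_right]
          simp only [hu_def, hg, hg', if_false, if_true]
          rw [heq]; exact this
        · simp only [hu_def, hg, hg', if_false]
          exact hpickmem (Φ.act g x)
    have huorb : u ∈ orbitSpace Φ 𝒰 := by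
      apply subset_closure
      exact ⟨x, Set.mem_iInter.mpr fun g => (Φ.mem_inv_image g _ x).mpr (hux g)⟩
    have hsorb : shift G (CoverElt 𝒰) h u ∈ orbitSpace Φ 𝒰 := by
      apply subset_closure
      refine ⟨y, Set.mem_iInter.mpr fun g => (Φ.mem_inv_image g _ y).mpr ?_⟩
      show Φ.act g y ∈ (u (g * h)).val
      have : Φ.act g y = Φ.act (g * h) x := by rw [hy_def, Φ.act_mul]
      rw [this]; exact hux (g * h)
    refine ⟨hne, u, ⟨fun b hb => hucyl b hb, huorb⟩, ?_⟩
    rw [(shiftDyn G (CoverElt 𝒰)).mem_inv_image h _ u]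
    exact ⟨fun b hb => hucyl' b hb, hsorb⟩
  · rintro h ⟨hne, u, ⟨hucyl, huorb⟩, huimg⟩
    have hshift : shift G (CoverElt 𝒰) h u ∈
        cylinder B P' ∩ orbitSpace Φ 𝒰 :=
      ((shiftDyn G (CoverElt 𝒰)).mem_inv_image h _ u).mp huimg
    have hucyl' : ∀ b ∈ B, u (b * h) = P' b := fun b hb => hshift.1 b hb
    obtain ⟨w, ⟨z, hz⟩, hw⟩ :=
      exists_agree_of_mem_closure huorb (B ∪ B.image (· * h))
    have hzw : ∀ g : G, Φ.act g z ∈ (w g).val := by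
      intro g
      exact (Φ.mem_inv_image g _ z).mp (Set.mem_iInter.mp hz g)
    refine ⟨hne, z, ?_, ?_⟩
    · refine Set.mem_iInter₂.mpr fun b hb => (Φ.mem_inv_image b _ z).mpr ?_
      have hwb : w b = P b := by
        rw [hw b (Finset.mem_union_left _ hb)]; exact hucyl b hb
      rw [← hwb]; exact hzw b
    · rw [Φ.mem_inv_image h _ z]
      refine Set.mem_iInter₂.mpr fun b hb => ?_
      rw [Φ.mem_inv_image b _ (Φ.act h z), ← Φ.act_mul]
      have hmem : b * h ∈ B ∪ B.image (· * h) :=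
        Finset.mem_union_right _ (Finset.mem_image.mpr ⟨b, hb, rfl⟩)
      have hwbh : w (b * h) = P' b := by
        rw [hw _ hmem]; exact hucyl' b hb
      rw [← hwbh]; exact hzw (b * h)
end

section
/- Let (X, G, Φ) be a dynamical system, 𝒰 ∈ Part(X) a finite clopen partition of X, and A a finite subset of G. Then for any u ∈ 𝒪(𝒰), any P_A ∈ ℒ_A(𝒪(𝒰)), and any point x ∈ ∩_{g∈G} Φ_{g⁻¹}(π_g(u)), one has N(u, C(P_A) ∩ 𝒪(𝒰)) = N(x, U), where U = ∩_{g∈A} Φ_{g⁻¹}(P_A(g)). -/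
open Set

universe u

lemma DynAction.mem_act_inv_image {G X : Type u} [Group G] [TopologicalSpace X]
    (Φ : DynAction G X) (g : G) (S : Set X) (x : X) :
    x ∈ Φ.act g⁻¹ '' S ↔ Φ.act g x ∈ S := by
  constructor
  · rintro ⟨y, hy, rfl⟩
    rwa [← Φ.act_mul, mul_inv_cancel, Φ.act_one]
  · intro h
    exact ⟨Φ.act g x, h, by rw [← Φ.act_mul, inv_mul_cancel, Φ.act_one]⟩

lemma CoverElt.ext' {X : Type u} {𝒰 : Finset (Set X)} {a b : CoverElt 𝒰}
    (h : a.val = b.val) : a = b := by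
  cases a; cases b; simp_all

lemma shift_mem_orbitSpace {G X : Type u} [Group G] [TopologicalSpace X]
    (Φ : DynAction G X) (𝒰 : Finset (Set X)) (g : G) (u : G → CoverElt 𝒰)
    (hu : u ∈ orbitSpace Φ 𝒰) : shift G (CoverElt 𝒰) g u ∈ orbitSpace Φ 𝒰 := by
  refine map_mem_closure (continuous_pi fun h => continuous_apply (h * g)) hu ?_
  rintro y ⟨z, hz⟩
  simp only [Set.mem_iInter] at hz
  refine ⟨Φ.act g z, Set.mem_iInter.2 fun h => ?_⟩
  rw [Φ.mem_act_inv_image, ← Φ.act_mul]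
  exact (Φ.mem_act_inv_image (h * g) _ z).1 (hz (h * g))

/-- **Lemma 6.5.** For a clopen partition `𝒰`, hitting times from a point `u` of the
orbit space to a cylinder agree with hitting times from an encoded point `x` to the set
determined by the pattern. -/
theorem hittingTimes_point_cylinder_orbitSpace
    {G X : Type} [Group G] [Countable G] [TopologicalSpace X]
    [CompactSpace X] [T2Space X]
    (Φ : DynAction G X) (𝒰 : Finset (Set X)) (h𝒰 : IsClopenPartition 𝒰) (B : Finset G)
    (u : G → CoverElt 𝒰) (hu : u ∈ orbitSpace Φ 𝒰)
    (P : G → CoverElt 𝒰) (hP : P ∈ language B (orbitSpace Φ 𝒰))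
    (x : X) (hx : x ∈ ⋂ g : G, Φ.act g⁻¹ '' (u g).val) :
    hittingTimes (shiftDyn G (CoverElt 𝒰)) {u} (cylinder B P ∩ orbitSpace Φ 𝒰)
      = hittingTimes Φ {x} (⋂ g ∈ B, Φ.act g⁻¹ '' (P g).val) := by
  have hxg : ∀ g : G, Φ.act g x ∈ (u g).val := fun g =>
    (Φ.mem_act_inv_image g _ x).1 (Set.mem_iInter.1 hx g)
  ext g
  simp only [hittingTimes, Set.mem_setOf_eq, Set.singleton_inter_nonempty]
  refine and_congr_right fun hg => ?_
  rw [(shiftDyn G (CoverElt 𝒰)).mem_act_inv_image, Φ.mem_act_inv_image]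
  show shift G (CoverElt 𝒰) g u ∈ _ ↔ _
  constructor
  · rintro ⟨hcyl, -⟩
    refine Set.mem_iInter₂.2 fun b hb => ?_
    rw [Φ.mem_act_inv_image, ← Φ.act_mul, ← hcyl b hb]
    exact hxg (b * g)
  · intro h
    refine ⟨fun b hb => ?_, shift_mem_orbitSpace Φ 𝒰 g u hu⟩
    have h1 : Φ.act (b * g) x ∈ (P b).val := by
      have := Set.mem_iInter₂.1 h b hb
      rwa [Φ.mem_act_inv_image, ← Φ.act_mul] at this
    have h2 : Φ.act (b * g) x ∈ (u (b * g)).val := hxg (b * g)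
    refine CoverElt.ext' ?_
    by_contra hne
    have := h𝒰.2.2 _ (u (b * g)).mem _ (P b).mem hne
    exact absurd (Set.mem_inter h2 h1) (by rw [this]; exact Set.notMem_empty _)
end
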